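/- Suppose the stepsize equals γ* = (4/25)·μ / (K·L·(μ + L)). Then for every k ≥ 0 the IAG iterates satisfy f(x^k) − f(x*) ≤ (L/2) · (1 − c_K/(Q + 1)²)^{2k} · ‖x^0 − x*‖², where c_K = (2/25) / (K·(2K + 1)) and Q = L/μ. -/

import Mathlib

open Set InnerProductSpace

local notation "⟪" x ", " y "⟫" => @inner ℝ _ _ x y

section Aux

variable {H : Type*} [NormedAddCommGroup H] [InnerProductSpace ℝ H] [CompleteSpace H]

theorem IAG.hasGradientAt_sum {ι : Type*} (s : Finset ι) (f : ι → H → ℝ) (g : ι → H) (x : H)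
    (h : ∀ i ∈ s, HasGradientAt (f i) (g i) x) :
    HasGradientAt (fun y => ∑ i ∈ s, f i y) (∑ i ∈ s, g i) x := by
  rw [hasGradientAt_iff_hasFDerivAt, map_sum]
  exact HasFDerivAt.fun_sum fun i hi => hasGradientAt_iff_hasFDerivAt.mp (h i hi)

theorem IAG.hasGradientAt_sub (c₁ c₂ : H → ℝ) (g₁ g₂ : H) (x : H)
    (h₁ : HasGradientAt c₁ g₁ x) (h₂ : HasGradientAt c₂ g₂ x) :
    HasGradientAt (fun y => c₁ y - c₂ y) (g₁ - g₂) x := by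
  rw [hasGradientAt_iff_hasFDerivAt, map_sub]
  exact (hasGradientAt_iff_hasFDerivAt.mp h₁).sub (hasGradientAt_iff_hasFDerivAt.mp h₂)

theorem IAG.hasGradientAt_norm_sq (c : ℝ) (p : H) :
    HasGradientAt (fun y : H => c * ‖y‖ ^ 2) ((2 * c) • p) p := by
  rw [hasGradientAt_iff_hasFDerivAt]
  have h1 : HasFDerivAt (fun y : H => ⟪y, y⟫)
      ((fderivInnerCLM ℝ (p, p)).comp ((ContinuousLinearMap.id ℝ H).prod
        (ContinuousLinearMap.id ℝ H))) p :=
    (hasFDerivAt_id p).inner ℝ (hasFDerivAt_id p)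
  have h2 := h1.const_mul c
  have heq : (fun y : H => c * ⟪y, y⟫) = fun y : H => c * ‖y‖ ^ 2 := by
    funext y; rw [real_inner_self_eq_norm_sq]
  rw [heq] at h2
  convert h2 using 1
  · rfl
  ext v
  simp [toDual_apply_apply, fderivInnerCLM_apply, real_inner_smul_left, real_inner_comm p v]
  ring

theorem IAG.hasDerivAt_line (c : H → ℝ) (G : H → H) (hG : ∀ p, HasGradientAt c (G p) p)
    (p d : H) (t : ℝ) :
    HasDerivAt (fun s : ℝ => c (p + s • d)) ⟪G (p + t • d), d⟫ t := by
  have hline : HasDerivAt (fun s : ℝ => p + s • d) d t := by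
    simpa using ((hasDerivAt_id t).smul_const d).const_add p
  have := (hasGradientAt_iff_hasFDerivAt.mp (hG (p + t • d))).comp_hasDerivAt t hline
  simpa [toDual_apply_apply, Function.comp_def] using this

/-- Monotone gradient implies the first-order lower bound, via the mean value theorem. -/
theorem IAG.first_order_of_mono (c : H → ℝ) (G : H → H) (hG : ∀ p, HasGradientAt c (G p) p)
    (hmono : ∀ a b : H, 0 ≤ ⟪G a - G b, a - b⟫) (p q : H) :
    c p + ⟪G p, q - p⟫ ≤ c q := by
  set d := q - p with hd
  have hφ : ∀ t : ℝ, HasDerivAt (fun s : ℝ => c (p + s • d)) ⟪G (p + t • d), d⟫ t :=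
    IAG.hasDerivAt_line c G hG p d
  obtain ⟨ξ, hξ, hval⟩ := exists_hasDerivAt_eq_slope (fun s : ℝ => c (p + s • d))
    (fun t => ⟪G (p + t • d), d⟫) one_pos
    (fun t _ => (hφ t).continuousAt.continuousWithinAt) (fun t _ => hφ t)
  have h0 : p + (0 : ℝ) • d = p := by simp
  have h1 : p + (1 : ℝ) • d = q := by simp [hd]
  rw [h1] at hval
  have hmono' := hmono (p + ξ • d) p
  have hsimp : (p + ξ • d) - p = ξ • d := by abel
  rw [hsimp, real_inner_smul_right, inner_sub_left] at hmono'
  have hξpos : (0 : ℝ) < ξ := hξ.1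
  have hkey : ⟪G p, d⟫ ≤ ⟪G (p + ξ • d), d⟫ := by nlinarith
  have hval' : ⟪G (p + ξ • d), d⟫ = c q - c (p + (0 : ℝ) • d) := by
    rw [hval]; ring
  rw [h0] at hval'
  linarith [hkey.trans_eq hval']

/-- Convexity implies monotone gradient. -/
theorem IAG.mono_of_convex (c : H → ℝ) (G : H → H) (hG : ∀ p, HasGradientAt c (G p) p)
    (hc : ConvexOn ℝ Set.univ c) (a b : H) : 0 ≤ ⟪G a - G b, a - b⟫ := by
  set d := a - b with hd
  set φ := fun s : ℝ => c (b + s • d) with hφdef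
  have hφ : ∀ t : ℝ, HasDerivAt φ ⟪G (b + t • d), d⟫ t := IAG.hasDerivAt_line c G hG b d
  have hφc : ConvexOn ℝ Set.univ φ := by
    have h := hc.comp_affineMap (AffineMap.lineMap b a : ℝ →ᵃ[ℝ] H)
    have heq : (c ∘ (AffineMap.lineMap b a : ℝ →ᵃ[ℝ] H)) = φ := by
      funext t
      simp only [Function.comp_apply, AffineMap.lineMap_apply, hφdef, hd]
      congr 1
      simp only [vsub_eq_sub, vadd_eq_add]
      abel
    rw [heq] at h
    simpa using h
  have hmono := hφc.monotoneOn_deriv (fun t _ => (hφ t).differentiableAt)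
  have h01 : deriv φ 0 ≤ deriv φ 1 :=
    hmono (mem_univ (0 : ℝ)) (mem_univ (1 : ℝ)) zero_le_one
  rw [(hφ 0).deriv, (hφ 1).deriv] at h01
  have h0 : b + (0 : ℝ) • d = b := by simp
  have h1 : b + (1 : ℝ) • d = a := by simp [hd]
  rw [h0, h1] at h01
  rw [inner_sub_left]
  linarith

end Aux

/-- Key numeric inequality for the IAG stepsize. -/
theorem IAG.keynum (a b k : ℝ) (ha : 0 < a) (hab : a ≤ b) (hk : 1 ≤ k) :
    (2 / 25) / (k * (2 * k + 1)) / (b / a + 1) ^ 2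
      + 2 * ((4 / 25) * a / (k * b * (a + b))) ^ 2 * k * b ^ 2
    ≤ ((4 / 25) * a / (k * b * (a + b))) * a
      - ((4 / 25) * a / (k * b * (a + b))) ^ 2 * b ^ 2 / 2 := by
  have hb : 0 < b := ha.trans_le hab
  have hk0 : 0 < k := lt_of_lt_of_le one_pos hk
  have hab0 : 0 < a + b := by linarith
  set t : ℝ := a ^ 2 / (k * (a + b) ^ 2) with ht
  have htpos : 0 < t := by positivity
  have e1 : (2 / 25) / (k * (2 * k + 1)) / (b / a + 1) ^ 2 ≤ (2 / 75) * t := by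
    have h1 : (2 / 25) / (k * (2 * k + 1)) / (b / a + 1) ^ 2
        = 2 * a ^ 2 / (25 * ((2 * k + 1) * (k * (a + b) ^ 2))) := by
      field_simp
      ring
    have h2 : (2 / 75) * t = 2 * a ^ 2 / (75 * (k * (a + b) ^ 2)) := by
      rw [ht]; field_simp; try ring
    rw [h1, h2]
    apply div_le_div_of_nonneg_left (by positivity) (by positivity)
    have hX : 0 < k * (a + b) ^ 2 := by positivity
    nlinarith [mul_nonneg (by linarith : (0:ℝ) ≤ 2 * k - 2) hX.le]
  have e2 : 2 * ((4 / 25) * a / (k * b * (a + b))) ^ 2 * k * b ^ 2 = (32 / 625) * t := by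
    rw [ht]; field_simp; try ring
  have e3 : ((4 / 25) * a / (k * b * (a + b))) ^ 2 * b ^ 2 / 2 = (8 / 625) * t / k := by
    rw [ht]; field_simp; try ring
  have hkt2 : (8 / 625) * t / k ≤ (8 / 625) * t := by
    rw [div_le_iff₀ hk0]; nlinarith
  have e4 : (4 / 25) * t ≤ ((4 / 25) * a / (k * b * (a + b))) * a := by
    have h4l : (4 / 25) * t = 4 * a ^ 2 / (25 * (k * (a + b) ^ 2)) := by
      rw [ht]; field_simp; try ring
    have h4r : ((4 / 25) * a / (k * b * (a + b))) * a
        = 4 * a ^ 2 / (25 * (k * b * (a + b))) := by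
      field_simp; try ring
    rw [h4l, h4r]
    apply div_le_div_of_nonneg_left (by positivity) (by positivity)
    nlinarith [mul_nonneg (mul_pos hk0 hab0).le ha.le]
  rw [e2, e3]
  linarith

theorem IAG.contraction_sq {H : Type*} [NormedAddCommGroup H] [InnerProductSpace ℝ H]
    (u v : H) (γ μ L : ℝ) (hγ : 0 < γ)
    (hinner : μ * ‖u‖ ^ 2 ≤ ⟪v, u⟫) (hvnorm : ‖v‖ ≤ L * ‖u‖) (hL : 0 ≤ L) :
    ‖u - γ • v‖ ^ 2 ≤ ((1 - (γ * μ - γ ^ 2 * L ^ 2 / 2)) * ‖u‖) ^ 2 := by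
  rw [norm_sub_sq_real, real_inner_smul_right, norm_smul, Real.norm_eq_abs,
    abs_of_pos hγ, mul_pow]
  have h1 : ‖v‖ ^ 2 ≤ L ^ 2 * ‖u‖ ^ 2 := by nlinarith [norm_nonneg v, norm_nonneg u]
  have h2 : ⟪u, v⟫ = ⟪v, u⟫ := real_inner_comm v u
  rw [h2]
  nlinarith [mul_le_mul_of_nonneg_left hinner (by positivity : (0:ℝ) ≤ 2 * γ),
    mul_le_mul_of_nonneg_left h1 (sq_nonneg γ),
    mul_nonneg (sq_nonneg (γ * μ - γ ^ 2 * L ^ 2 / 2)) (sq_nonneg ‖u‖)]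

theorem IAG.fact1 (μ L k : ℝ) (hμ : 0 < μ) (hμL : μ ≤ L) (hk : 1 ≤ k) :
    (4 / 25) * μ * μ ≤ k * L * (μ + L) := by
  have hL0 : 0 < L := hμ.trans_le hμL
  have h1 : μ * μ ≤ L * (μ + L) := by
    nlinarith [mul_le_mul_of_nonneg_right hμL hμ.le, mul_pos hL0 hL0]
  have h2 : L * (μ + L) ≤ k * (L * (μ + L)) :=
    le_mul_of_one_le_left (by positivity) hk
  have h3 : k * (L * (μ + L)) = k * L * (μ + L) := by ring
  have h4 : (4 / 25) * μ * μ ≤ μ * μ := by nlinarith [mul_pos hμ hμ]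
  linarith

theorem IAG.fact2 (q : ℝ) (h : 1 ≤ q) : (1 : ℝ) ≤ (q + 1) ^ 2 := by nlinarith

theorem IAG.fact3 (k : ℝ) (h : 1 ≤ k) : (3 : ℝ) ≤ k * (2 * k + 1) := by nlinarith

set_option maxHeartbeats 2000000 in
/-- Explicit linear rate of the IAG method with the stepsize `γ* = (4/25)μ/(KL(μ+L))`
in terms of function values. -/
theorem iag_explicit_rate_cost
    (n m : ℕ) (hm : 1 ≤ m)
    (f : Fin m → EuclideanSpace ℝ (Fin n) → ℝ)
    (Li : Fin m → ℝ) (hLi : ∀ i, 0 ≤ Li i)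
    (L : ℝ) (hL : L = ∑ i, Li i)
    (hconv : ∀ i, ConvexOn ℝ Set.univ (f i))
    (hdiff : ∀ i, Differentiable ℝ (f i))
    (hlip : ∀ i y z, ‖gradient (f i) y - gradient (f i) z‖ ≤ Li i * ‖y - z‖)
    (K : ℕ) (hK : 1 ≤ K)
    (τ : Fin m → ℕ → ℕ)
    (hτ : ∀ i k, k - K ≤ τ i k ∧ τ i k ≤ k)
    (hτ0 : ∀ i, τ i 0 = 0)
    (F : EuclideanSpace ℝ (Fin n) → ℝ) (hF : F = fun y => ∑ i, f i y)
    (x g e : ℕ → EuclideanSpace ℝ (Fin n))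
    (hg : ∀ k, g k = ∑ i, gradient (f i) (x (τ i k)))
    (he : ∀ k, e k = g k - gradient F (x k))
    (γ : ℝ) (hγ : 0 < γ)
    (hx : ∀ k, x (k + 1) = x k - γ • g k)
    (μ : ℝ) (hμ : 0 < μ) (hμL : μ ≤ L)
    (hsc : ConvexOn ℝ Set.univ (fun y => F y - μ / 2 * ‖y‖ ^ 2))
    (xs : EuclideanSpace ℝ (Fin n))
    (hmin : ∀ y, F xs ≤ F y) (hgxs : gradient F xs = 0)
    (hγstar : γ = (4 / 25) * μ / (K * L * (μ + L))) :
    ∀ k, F (x k) - F xs ≤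
      (L / 2) * (1 - ((2 / 25) / (K * (2 * K + 1))) / (L / μ + 1) ^ 2) ^ (2 * k)
        * ‖x 0 - xs‖ ^ 2 := by
  have hL0 : 0 < L := lt_of_lt_of_le hμ hμL
  have hKR : (1 : ℝ) ≤ (K : ℝ) := by exact_mod_cast hK
  have hKR0 : (0 : ℝ) < (K : ℝ) := lt_of_lt_of_le one_pos hKR
  -- the aggregated gradient map
  set gF : EuclideanSpace ℝ (Fin n) → EuclideanSpace ℝ (Fin n) :=
    fun p => ∑ i, gradient (f i) p with hgF
  have hFgrad : ∀ p, HasGradientAt F (gF p) p := by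
    intro p
    rw [hF]
    exact IAG.hasGradientAt_sum Finset.univ _ _ p
      (fun i _ => ((hdiff i) p).hasGradientAt)
  have hgradF : ∀ p, gradient F p = gF p := fun p => (hFgrad p).gradient
  have hgFxs : gF xs = 0 := by rw [← hgradF xs]; exact hgxs
  -- Lipschitz continuity of the aggregated gradient
  have hLip : ∀ p q, ‖gF p - gF q‖ ≤ L * ‖p - q‖ := by
    intro p q
    have h1 : gF p - gF q = ∑ i, (gradient (f i) p - gradient (f i) q) := by
      rw [hgF]; rw [Finset.sum_sub_distrib]
    rw [h1, hL, Finset.sum_mul]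
    exact (norm_sum_le _ _).trans (Finset.sum_le_sum fun i _ => hlip i p q)
  -- strong monotonicity of the aggregated gradient
  have smono : ∀ p q, μ * ‖p - q‖ ^ 2 ≤ ⟪gF p - gF q, p - q⟫ := by
    intro p q
    have hGc : ∀ p, HasGradientAt (fun y => F y - μ / 2 * ‖y‖ ^ 2) (gF p - μ • p) p := by
      intro p
      have h2 := IAG.hasGradientAt_norm_sq (μ / 2) p
      rw [show 2 * (μ / 2) = μ by ring] at h2
      exact IAG.hasGradientAt_sub F (fun y => μ / 2 * ‖y‖ ^ 2) _ _ p (hFgrad p) h2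
    have hmono := IAG.mono_of_convex _ _ hGc hsc p q
    have hexp : (gF p - μ • p) - (gF q - μ • q) = (gF p - gF q) - μ • (p - q) := by
      rw [smul_sub]; abel
    rw [hexp, inner_sub_left, real_inner_smul_left, real_inner_self_eq_norm_sq] at hmono
    linarith
  -- descent bound at the minimizer
  have descent : ∀ p, F p - F xs ≤ L / 2 * ‖p - xs‖ ^ 2 := by
    intro p
    have hG2 : ∀ p, HasGradientAt (fun y => L / 2 * ‖y‖ ^ 2 - F y) (L • p - gF p) p := by
      intro p
      have h2 := IAG.hasGradientAt_norm_sq (L / 2) p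
      rw [show 2 * (L / 2) = L by ring] at h2
      exact IAG.hasGradientAt_sub (fun y => L / 2 * ‖y‖ ^ 2) F _ _ p h2 (hFgrad p)
    have hmono2 : ∀ a b : EuclideanSpace ℝ (Fin n),
        0 ≤ ⟪(L • a - gF a) - (L • b - gF b), a - b⟫ := by
      intro a b
      have hexp : (L • a - gF a) - (L • b - gF b) = L • (a - b) - (gF a - gF b) := by
        rw [smul_sub]; abel
      rw [hexp, inner_sub_left, real_inner_smul_left, real_inner_self_eq_norm_sq]
      have h1 : ⟪gF a - gF b, a - b⟫ ≤ ‖gF a - gF b‖ * ‖a - b‖ := real_inner_le_norm _ _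
      have h2 : ‖gF a - gF b‖ * ‖a - b‖ ≤ (L * ‖a - b‖) * ‖a - b‖ :=
        mul_le_mul_of_nonneg_right (hLip a b) (norm_nonneg _)
      have h3 : (L * ‖a - b‖) * ‖a - b‖ = L * ‖a - b‖ ^ 2 := by ring
      linarith
    have hfo := IAG.first_order_of_mono _ _ hG2 hmono2 xs p
    have hGxs : L • xs - gF xs = L • xs := by rw [hgFxs, sub_zero]
    rw [hGxs] at hfo
    have hexp2 : ⟪L • xs, p - xs⟫ = L * (⟪xs, p⟫ - ‖xs‖ ^ 2) := by
      rw [real_inner_smul_left, inner_sub_right, real_inner_self_eq_norm_sq]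
    have hexp3 : ‖p - xs‖ ^ 2 = ‖p‖ ^ 2 - 2 * ⟪p, xs⟫ + ‖xs‖ ^ 2 := norm_sub_sq_real p xs
    rw [hexp2] at hfo
    have hcomm : ⟪xs, p⟫ = ⟪p, xs⟫ := real_inner_comm p xs
    have hfo2 : F p - F xs ≤ L / 2 * ‖p‖ ^ 2 - L / 2 * ‖xs‖ ^ 2
        - L * (⟪xs, p⟫ - ‖xs‖ ^ 2) := by linarith
    have hfin : L / 2 * ‖p‖ ^ 2 - L / 2 * ‖xs‖ ^ 2 - L * (⟪xs, p⟫ - ‖xs‖ ^ 2)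
        = L / 2 * ‖p - xs‖ ^ 2 := by rw [hexp3, hcomm]; ring
    linarith
  -- constants
  set δ : ℝ := ((2 / 25) / ((K : ℝ) * (2 * (K : ℝ) + 1))) / (L / μ + 1) ^ 2 with hδ
  set ρ : ℝ := 1 - δ with hρ
  have hkey := IAG.keynum μ L (K : ℝ) hμ hμL hKR
  rw [← hγstar] at hkey
  -- hkey : δ + 2 * γ ^ 2 * K * L ^ 2 ≤ γ * μ - γ ^ 2 * L ^ 2 / 2
  set β : ℝ := γ * μ - γ ^ 2 * L ^ 2 / 2 with hβ
  have hδpos : 0 < δ := by rw [hδ]; positivity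
  have hY1 : (1 : ℝ) ≤ (L / μ + 1) ^ 2 := IAG.fact2 _ ((one_le_div hμ).mpr hμL)
  have hX3 : (3 : ℝ) ≤ (K : ℝ) * (2 * (K : ℝ) + 1) := IAG.fact3 _ hKR
  have hδle : δ ≤ 2 / 75 := by
    rw [hδ]
    calc (2 / 25) / ((K : ℝ) * (2 * (K : ℝ) + 1)) / (L / μ + 1) ^ 2
        ≤ (2 / 25) / ((K : ℝ) * (2 * (K : ℝ) + 1)) / 1 := by
          apply div_le_div_of_nonneg_left (by positivity) one_pos hY1
      _ = (2 / 25) / ((K : ℝ) * (2 * (K : ℝ) + 1)) := by rw [div_one]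
      _ ≤ (2 / 25) / 3 := by
          apply div_le_div_of_nonneg_left (by norm_num) (by norm_num) hX3
      _ ≤ 2 / 75 := by norm_num
  have hρ0 : 0 < ρ := by rw [hρ]; linarith
  have hρ1 : ρ ≤ 1 := by rw [hρ]; linarith
  -- ρ ^ (2K) ≥ 1/2
  have h2Kδ : 2 * (K : ℝ) * δ ≤ 1 / 2 := by
    have hδ' : δ ≤ ((2 / 25) / ((K : ℝ) * (2 * (K : ℝ) + 1))) := by
      rw [hδ]
      calc ((2 / 25) / ((K : ℝ) * (2 * (K : ℝ) + 1))) / (L / μ + 1) ^ 2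
          ≤ ((2 / 25) / ((K : ℝ) * (2 * (K : ℝ) + 1))) / 1 :=
            div_le_div_of_nonneg_left (by positivity) one_pos hY1
        _ = (2 / 25) / ((K : ℝ) * (2 * (K : ℝ) + 1)) := div_one _
    have h1 : 2 * (K : ℝ) * δ ≤ 2 * (K : ℝ) * ((2 / 25) / ((K : ℝ) * (2 * (K : ℝ) + 1))) :=
      mul_le_mul_of_nonneg_left hδ' (by positivity)
    have h2 : 2 * (K : ℝ) * ((2 / 25) / ((K : ℝ) * (2 * (K : ℝ) + 1)))
        = (4 / 25) / (2 * (K : ℝ) + 1) := by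
      field_simp
      ring
    have h3 : (4 / 25 : ℝ) / (2 * (K : ℝ) + 1) ≤ (4 / 25) / 3 :=
      div_le_div_of_nonneg_left (by norm_num) (by norm_num) (by linarith)
    calc 2 * (K : ℝ) * δ ≤ (4 / 25) / (2 * (K : ℝ) + 1) := by rw [← h2]; exact h1
      _ ≤ (4 / 25) / 3 := h3
      _ ≤ 1 / 2 := by norm_num
  have hρ2K : (1 : ℝ) / 2 ≤ ρ ^ (2 * K) := by
    have hb := one_add_mul_le_pow (show (-2 : ℝ) ≤ -δ by linarith) (2 * K)
    have hcast : ((2 * K : ℕ) : ℝ) = 2 * (K : ℝ) := by push_cast; ring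
    rw [hcast] at hb
    have : 1 + 2 * (K : ℝ) * (-δ) = 1 - 2 * (K : ℝ) * δ := by ring
    rw [this] at hb
    have : (1 : ℝ) + -δ = ρ := by rw [hρ]; ring
    rw [this] at hb
    linarith
  have hβ1 : β ≤ 1 := by
    have hγμ : γ * μ ≤ 1 := by
      rw [hγstar, div_mul_eq_mul_div, div_le_one (by positivity)]
      exact IAG.fact1 μ L (K : ℝ) hμ hμL hKR
    have hnn : (0 : ℝ) ≤ γ ^ 2 * L ^ 2 / 2 := by positivity
    rw [hβ]
    linarith
  have hβδ : 2 * γ ^ 2 * (K : ℝ) * L ^ 2 ≤ β - δ := by rw [hβ]; linarith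
  -- the main induction: distance contraction
  have main : ∀ k, ‖x k - xs‖ ≤ ρ ^ k * ‖x 0 - xs‖ := by
    intro k
    induction k using Nat.strong_induction_on with
    | _ k IH =>
      cases k with
      | zero => simp
      | succ k =>
        -- bound on ‖g j‖ for j ≤ k
        have gbound : ∀ j, j ≤ k → ‖g j‖ ≤ L * ρ ^ (j - K) * ‖x 0 - xs‖ := by
          intro j hj
          have h0 : g j = ∑ i, (gradient (f i) (x (τ i j)) - gradient (f i) xs) := by
            rw [Finset.sum_sub_distrib]
            have : (∑ i, gradient (f i) xs) = gF xs := by rw [hgF]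
            rw [this, hgFxs, sub_zero, hg j]
          rw [h0]
          calc ‖∑ i, (gradient (f i) (x (τ i j)) - gradient (f i) xs)‖
              ≤ ∑ i, ‖gradient (f i) (x (τ i j)) - gradient (f i) xs‖ := norm_sum_le _ _
            _ ≤ ∑ i, Li i * (ρ ^ (j - K) * ‖x 0 - xs‖) := by
                apply Finset.sum_le_sum
                intro i _
                calc ‖gradient (f i) (x (τ i j)) - gradient (f i) xs‖
                    ≤ Li i * ‖x (τ i j) - xs‖ := hlip i _ xs
                  _ ≤ Li i * (ρ ^ (j - K) * ‖x 0 - xs‖) := by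
                      apply mul_le_mul_of_nonneg_left _ (hLi i)
                      calc ‖x (τ i j) - xs‖ ≤ ρ ^ (τ i j) * ‖x 0 - xs‖ :=
                            IH (τ i j) (by have := (hτ i j).2; omega)
                        _ ≤ ρ ^ (j - K) * ‖x 0 - xs‖ := by
                            apply mul_le_mul_of_nonneg_right _ (norm_nonneg _)
                            exact pow_le_pow_of_le_one hρ0.le hρ1 (hτ i j).1
            _ = L * ρ ^ (j - K) * ‖x 0 - xs‖ := by
                rw [hL, ← Finset.sum_mul]; ring
        have step : ∀ j, ‖x (j + 1) - x j‖ = γ * ‖g j‖ := by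
          intro j
          rw [hx j]
          have : x j - γ • g j - x j = -(γ • g j) := by abel
          rw [this, norm_neg, norm_smul, Real.norm_eq_abs, abs_of_pos hγ]
        -- telescoping
        have tele : ∀ a b : ℕ, a ≤ b →
            ‖x b - x a‖ ≤ ∑ j ∈ Finset.Ico a b, ‖x (j + 1) - x j‖ := by
          intro a b hab
          induction b, hab using Nat.le_induction with
          | base => simp
          | succ b hab ih =>
            rw [Finset.sum_Ico_succ_top (by omega)]
            calc ‖x (b + 1) - x a‖ ≤ ‖x b - x a‖ + ‖x (b + 1) - x b‖ := by
                  have : x (b + 1) - x a = (x b - x a) + (x (b + 1) - x b) := by abel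
                  rw [this]; exact norm_add_le _ _
              _ ≤ (∑ j ∈ Finset.Ico a b, ‖x (j + 1) - x j‖) + ‖x (b + 1) - x b‖ := by
                  linarith [ih]
        -- error bound at step k (compare g k with gF (x k))
        have errbound : ‖g k - gF (x k)‖
            ≤ L * ((K : ℝ) * (γ * (L * ρ ^ (k - 2 * K) * ‖x 0 - xs‖))) := by
          have hterm : ∀ j ∈ Finset.Ico (k - K) k,
              ‖x (j + 1) - x j‖ ≤ γ * (L * ρ ^ (k - 2 * K) * ‖x 0 - xs‖) := by
            intro j hj
            rw [Finset.mem_Ico] at hj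
            rw [step j]
            apply mul_le_mul_of_nonneg_left _ hγ.le
            calc ‖g j‖ ≤ L * ρ ^ (j - K) * ‖x 0 - xs‖ := gbound j (by omega)
              _ ≤ L * ρ ^ (k - 2 * K) * ‖x 0 - xs‖ := by
                  apply mul_le_mul_of_nonneg_right _ (norm_nonneg _)
                  apply mul_le_mul_of_nonneg_left _ hL0.le
                  exact pow_le_pow_of_le_one hρ0.le hρ1 (by omega)
          have hpath : ∀ i : Fin m, ‖x (τ i k) - x k‖
              ≤ (K : ℝ) * (γ * (L * ρ ^ (k - 2 * K) * ‖x 0 - xs‖)) := by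
            intro i
            have h1 : ‖x (τ i k) - x k‖ = ‖x k - x (τ i k)‖ := by rw [norm_sub_rev]
            rw [h1]
            calc ‖x k - x (τ i k)‖ ≤ ∑ j ∈ Finset.Ico (τ i k) k, ‖x (j + 1) - x j‖ :=
                  tele _ _ (hτ i k).2
              _ ≤ ∑ j ∈ Finset.Ico (k - K) k, ‖x (j + 1) - x j‖ := by
                  apply Finset.sum_le_sum_of_subset_of_nonneg
                  · apply Finset.Ico_subset_Ico (hτ i k).1 le_rfl
                  · intro j _ _; exact norm_nonneg _
              _ ≤ ∑ _j ∈ Finset.Ico (k - K) k, γ * (L * ρ ^ (k - 2 * K) * ‖x 0 - xs‖) :=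
                  Finset.sum_le_sum hterm
              _ = ((Finset.Ico (k - K) k).card : ℝ)
                    * (γ * (L * ρ ^ (k - 2 * K) * ‖x 0 - xs‖)) := by
                  rw [Finset.sum_const, nsmul_eq_mul]
              _ ≤ (K : ℝ) * (γ * (L * ρ ^ (k - 2 * K) * ‖x 0 - xs‖)) := by
                  apply mul_le_mul_of_nonneg_right _ (by positivity)
                  have hcard : (Finset.Ico (k - K) k).card ≤ K := by
                    rw [Nat.card_Ico]; omega
                  exact_mod_cast hcard
          have h0 : g k - gF (x k) = ∑ i, (gradient (f i) (x (τ i k)) - gradient (f i) (x k)) := by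
            rw [hg k, hgF, Finset.sum_sub_distrib]
          rw [h0]
          calc ‖∑ i, (gradient (f i) (x (τ i k)) - gradient (f i) (x k))‖
              ≤ ∑ i, ‖gradient (f i) (x (τ i k)) - gradient (f i) (x k)‖ := norm_sum_le _ _
            _ ≤ ∑ i, Li i * ((K : ℝ) * (γ * (L * ρ ^ (k - 2 * K) * ‖x 0 - xs‖))) := by
                apply Finset.sum_le_sum
                intro i _
                calc ‖gradient (f i) (x (τ i k)) - gradient (f i) (x k)‖
                    ≤ Li i * ‖x (τ i k) - x k‖ := hlip i _ _
                  _ ≤ Li i * ((K : ℝ) * (γ * (L * ρ ^ (k - 2 * K) * ‖x 0 - xs‖))) :=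
                      mul_le_mul_of_nonneg_left (hpath i) (hLi i)
            _ = L * ((K : ℝ) * (γ * (L * ρ ^ (k - 2 * K) * ‖x 0 - xs‖))) := by
                rw [hL, ← Finset.sum_mul]
        -- contraction of the exact gradient step
        have hvnorm : ‖gF (x k)‖ ≤ L * ‖x k - xs‖ := by
          have h := hLip (x k) xs
          rwa [hgFxs, sub_zero] at h
        have hinner : μ * ‖x k - xs‖ ^ 2 ≤ ⟪gF (x k), x k - xs⟫ := by
          have h := smono (x k) xs
          rwa [hgFxs, sub_zero] at h
        have h1β : 0 ≤ 1 - β := by linarith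
        have hsq : ‖(x k - xs) - γ • gF (x k)‖ ^ 2 ≤ ((1 - β) * ‖x k - xs‖) ^ 2 := by
          rw [hβ]
          exact IAG.contraction_sq _ _ γ μ L hγ hinner hvnorm hL0.le
        have hcontr : ‖(x k - xs) - γ • gF (x k)‖ ≤ (1 - β) * ‖x k - xs‖ :=
          le_of_pow_le_pow_left₀ two_ne_zero (by positivity) hsq
        -- combine
        have hxk1 : x (k + 1) - xs = ((x k - xs) - γ • gF (x k)) - γ • (g k - gF (x k)) := by
          rw [hx k, smul_sub]; abel
        have hpowtail : ρ ^ (k - 2 * K) ≤ 2 * ρ ^ k := by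
          have hA : ρ ^ ((k - 2 * K) + 2 * K) ≤ ρ ^ k :=
            pow_le_pow_of_le_one hρ0.le hρ1 (by omega)
          rw [pow_add] at hA
          have hB : ρ ^ (k - 2 * K) * (1 / 2) ≤ ρ ^ (k - 2 * K) * ρ ^ (2 * K) :=
            mul_le_mul_of_nonneg_left hρ2K (by positivity)
          linarith
        have hDk : ‖x k - xs‖ ≤ ρ ^ k * ‖x 0 - xs‖ := IH k (by omega)
        calc ‖x (k + 1) - xs‖
            ≤ ‖(x k - xs) - γ • gF (x k)‖ + ‖γ • (g k - gF (x k))‖ := by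
              rw [hxk1]; exact norm_sub_le _ _
          _ ≤ (1 - β) * ‖x k - xs‖
              + γ * (L * ((K : ℝ) * (γ * (L * ρ ^ (k - 2 * K) * ‖x 0 - xs‖)))) := by
              have h1 : ‖γ • (g k - gF (x k))‖ = γ * ‖g k - gF (x k)‖ := by
                rw [norm_smul, Real.norm_eq_abs, abs_of_pos hγ]
              rw [h1]
              exact add_le_add hcontr (mul_le_mul_of_nonneg_left errbound hγ.le)
          _ ≤ (1 - β) * (ρ ^ k * ‖x 0 - xs‖)
              + (γ ^ 2 * (K : ℝ) * L ^ 2) * ((2 * ρ ^ k) * ‖x 0 - xs‖) := by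
              apply add_le_add
              · exact mul_le_mul_of_nonneg_left hDk h1β
              · have h2 : γ * (L * ((K : ℝ) * (γ * (L * ρ ^ (k - 2 * K) * ‖x 0 - xs‖))))
                    = (γ ^ 2 * (K : ℝ) * L ^ 2) * (ρ ^ (k - 2 * K) * ‖x 0 - xs‖) := by ring
                rw [h2]
                apply mul_le_mul_of_nonneg_left _ (by positivity)
                exact mul_le_mul_of_nonneg_right hpowtail (norm_nonneg _)
          _ ≤ ρ ^ (k + 1) * ‖x 0 - xs‖ := by
              have hfinal : (1 - β) + 2 * γ ^ 2 * (K : ℝ) * L ^ 2 ≤ ρ := by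
                rw [hρ]; linarith
              have hpknn : (0 : ℝ) ≤ ρ ^ k * ‖x 0 - xs‖ := by positivity
              have : (1 - β) * (ρ ^ k * ‖x 0 - xs‖)
                  + (γ ^ 2 * (K : ℝ) * L ^ 2) * ((2 * ρ ^ k) * ‖x 0 - xs‖)
                  = ((1 - β) + 2 * γ ^ 2 * (K : ℝ) * L ^ 2) * (ρ ^ k * ‖x 0 - xs‖) := by ring
              rw [this]
              have hps : ρ ^ (k + 1) * ‖x 0 - xs‖ = ρ * (ρ ^ k * ‖x 0 - xs‖) := by
                rw [pow_succ]; ring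
              rw [hps]
              exact mul_le_mul_of_nonneg_right hfinal hpknn
  -- conclude
  intro k
  have h1 := descent (x k)
  have h2 : ‖x k - xs‖ ^ 2 ≤ (ρ ^ k * ‖x 0 - xs‖) ^ 2 :=
    pow_le_pow_left₀ (norm_nonneg _) (main k) 2
  have h3 : (ρ ^ k * ‖x 0 - xs‖) ^ 2 = ρ ^ (2 * k) * ‖x 0 - xs‖ ^ 2 := by
    rw [mul_pow, ← pow_mul, mul_comm k 2]
  calc F (x k) - F xs ≤ L / 2 * ‖x k - xs‖ ^ 2 := h1
    _ ≤ L / 2 * ((ρ ^ k * ‖x 0 - xs‖) ^ 2) := by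
        apply mul_le_mul_of_nonneg_left h2 (by positivity)
    _ = L / 2 * (1 - ((2 / 25) / ((K : ℝ) * (2 * (K : ℝ) + 1))) / (L / μ + 1) ^ 2) ^ (2 * k)
        * ‖x 0 - xs‖ ^ 2 := by
        rw [h3, hρ, hδ]; ring
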